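/- Let L : ℝⁿ×ℝⁿ → ℝ be of class C², let q : ℝ → ℝⁿ be of class C², and fix β ∈ [0,1]. Define the discrete Lagrangian L_d^β(ε) = ε L( (1−β)q(0) + βq(ε), (q(ε)−q(0))/ε ). Then there exist C > 0 and ε₀ > 0 such that for all 0 < ε ≤ ε₀: | L_d^β(ε) − ∫₀^ε L(q(t), q̇(t)) dt | ≤ C ε²; and if β = 1/2 and L and q are of class C³, then | L_d^{1/2}(ε) − ∫₀^ε L(q(t), q̇(t)) dt | ≤ C ε³. -/

import Mathlib

open intervalIntegral

set_option maxHeartbeats 1000000 in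
/-- Consistency order of the discrete Lagrangian
`L_d^β(ε) = ε L((1-β)q(0) + βq(ε), (q(ε)-q(0))/ε)` with respect to the exact action
integral: order `ε²` for general `β ∈ [0,1]`, and order `ε³` for `β = 1/2` when `L` and
`q` are `C³`. -/
theorem discrete_lagrangian_consistency {n : ℕ}
    (L : (Fin n → ℝ) × (Fin n → ℝ) → ℝ) (hL : ContDiff ℝ 2 L)
    (q : ℝ → Fin n → ℝ) (hq : ContDiff ℝ 2 q)
    (β : ℝ) (hβ : β ∈ Set.Icc (0 : ℝ) 1) :
    ∃ C > (0 : ℝ), ∃ ε₀ > (0 : ℝ),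
      (∀ ε : ℝ, 0 < ε → ε ≤ ε₀ →
        |ε * L ((1 - β) • q 0 + β • q ε, ε⁻¹ • (q ε - q 0)) -
            ∫ t in (0 : ℝ)..ε, L (q t, deriv q t)| ≤ C * ε ^ 2) ∧
      (β = 1 / 2 → ContDiff ℝ 3 L → ContDiff ℝ 3 q →
        ∀ ε : ℝ, 0 < ε → ε ≤ ε₀ →
          |ε * L ((1 - β) • q 0 + β • q ε, ε⁻¹ • (q ε - q 0)) -
              ∫ t in (0 : ℝ)..ε, L (q t, deriv q t)| ≤ C * ε ^ 3) := by
  classical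
  obtain ⟨hβ0, hβ1⟩ := hβ
  -- basic differentiability facts
  have hqd : Differentiable ℝ q := hq.differentiable (by norm_num)
  have hq2 : ContDiff ℝ ((1 : WithTop ℕ∞) + 1) q := hq.of_le (by norm_num)
  have hq'cd : ContDiff ℝ 1 (deriv q) := (contDiff_succ_iff_deriv.mp hq2).2.2
  have hq'd : Differentiable ℝ (deriv q) := hq'cd.differentiable (by norm_num)
  have hq''cont : Continuous (deriv (deriv q)) := by
    have h1 : ContDiff ℝ ((0 : WithTop ℕ∞) + 1) (deriv q) := hq'cd.of_le (by norm_num)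
    exact ((contDiff_succ_iff_deriv.mp h1).2.2).continuous
  have hLd : Differentiable ℝ L := hL.differentiable (by norm_num)
  have hDL : ContDiff ℝ 1 (fderiv ℝ L) := hL.fderiv_right (by norm_num)
  have hDLd : Differentiable ℝ (fderiv ℝ L) := hDL.differentiable (by norm_num)
  have hD2cont : Continuous (fderiv ℝ (fderiv ℝ L)) :=
    (hDL.fderiv_right (by norm_num : (0 : WithTop ℕ∞) + 1 ≤ 1)).continuous
  -- bounds on the derivatives of q on [0,1]
  obtain ⟨Mq0, hMq0⟩ := (isCompact_Icc (a := (0:ℝ)) (b := 1)).exists_bound_of_continuousOn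
    (hq'cd.continuous.continuousOn)
  set Mq : ℝ := max Mq0 0 with hMqdef
  have hMqnn : 0 ≤ Mq := le_max_right _ _
  obtain ⟨K0, hK0⟩ := (isCompact_Icc (a := (0:ℝ)) (b := 1)).exists_bound_of_continuousOn
    (hq''cont.continuousOn)
  set K : ℝ := max K0 0 with hKdef
  have hKnn : 0 ≤ K := le_max_right _ _
  -- Lipschitz bounds for q and deriv q on [0,1]
  have hqlip : ∀ s ∈ Set.Icc (0:ℝ) 1, ∀ t ∈ Set.Icc (0:ℝ) 1, ‖q s - q t‖ ≤ Mq * ‖s - t‖ := by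
    intro s hs t ht
    exact (convex_Icc (0:ℝ) 1).norm_image_sub_le_of_norm_hasDerivWithin_le
      (fun x _ => (hqd x).hasDerivAt.hasDerivWithinAt)
      (fun x hx => le_trans (hMq0 x hx) (le_max_left _ _)) ht hs
  have hq'lip : ∀ s ∈ Set.Icc (0:ℝ) 1, ∀ t ∈ Set.Icc (0:ℝ) 1,
      ‖deriv q s - deriv q t‖ ≤ K * ‖s - t‖ := by
    intro s hs t ht
    exact (convex_Icc (0:ℝ) 1).norm_image_sub_le_of_norm_hasDerivWithin_le
      (fun x _ => (hq'd x).hasDerivAt.hasDerivWithinAt)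
      (fun x hx => le_trans (hK0 x hx) (le_max_left _ _)) ht hs
  -- the compact convex ball where everything happens
  set z₀ : (Fin n → ℝ) × (Fin n → ℝ) := (q 0, deriv q 0) with hz₀def
  set R : ℝ := Mq + K with hRdef
  set B : Set ((Fin n → ℝ) × (Fin n → ℝ)) := Metric.closedBall z₀ R with hBdef
  have hBconv : Convex ℝ B := convex_closedBall _ _
  have hBcpt : IsCompact B := isCompact_closedBall _ _
  obtain ⟨Λ0, hΛ0⟩ := hBcpt.exists_bound_of_continuousOn (hDL.continuous.continuousOn)
  set Λ : ℝ := max Λ0 0 with hΛdef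
  have hΛnn : 0 ≤ Λ := le_max_right _ _
  have hΛ : ∀ x ∈ B, ‖fderiv ℝ L x‖ ≤ Λ := fun x hx => le_trans (hΛ0 x hx) (le_max_left _ _)
  obtain ⟨M20, hM20⟩ := hBcpt.exists_bound_of_continuousOn (f := fderiv ℝ (fderiv ℝ L)) hD2cont.continuousOn
  set M2 : ℝ := max M20 0 with hM2def
  have hM2nn : 0 ≤ M2 := le_max_right _ _
  -- L is Λ-Lipschitz on B
  have hLlip : ∀ x ∈ B, ∀ y ∈ B, ‖L y - L x‖ ≤ Λ * ‖y - x‖ := by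
    intro x hx y hy
    exact hBconv.norm_image_sub_le_of_norm_hasFDerivWithin_le
      (fun z _ => (hLd z).hasFDerivAt.hasFDerivWithinAt) hΛ hx hy
  -- fderiv L is M2-Lipschitz on B
  have hDLlip : ∀ x ∈ B, ∀ y ∈ B, ‖fderiv ℝ L y - fderiv ℝ L x‖ ≤ M2 * ‖y - x‖ := by
    intro x hx y hy
    exact hBconv.norm_image_sub_le_of_norm_hasFDerivWithin_le
      (fun z _ => (hDLd z).hasFDerivAt.hasFDerivWithinAt)
      (fun z hz => le_trans (hM20 z hz) (le_max_left _ _)) hx hy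
  -- second-order Taylor bound for L on B
  have htaylor : ∀ z ∈ B, ∀ w ∈ B,
      |L w - L z - fderiv ℝ L z (w - z)| ≤ M2 * ‖w - z‖ * ‖w - z‖ := by
    intro z hz w hw
    set g : (Fin n → ℝ) × (Fin n → ℝ) → ℝ := fun y => L y - fderiv ℝ L z (y - z) with hgdef
    have hseg : segment ℝ z w ⊆ B := hBconv.segment_subset hz hw
    have hg : ∀ y ∈ segment ℝ z w,
        HasFDerivWithinAt g (fderiv ℝ L y - fderiv ℝ L z) (segment ℝ z w) y := by
      intro y _
      have h1 : HasFDerivAt (fun y => (fderiv ℝ L z) (y - z)) (fderiv ℝ L z) y := by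
        have h2 := (fderiv ℝ L z).hasFDerivAt (x := y)
        have h3 := h2.sub_const ((fderiv ℝ L z) z)
        simpa [map_sub] using h3
      exact ((hLd y).hasFDerivAt.sub h1).hasFDerivWithinAt
    have hbound : ∀ y ∈ segment ℝ z w, ‖fderiv ℝ L y - fderiv ℝ L z‖ ≤ M2 * ‖w - z‖ := by
      intro y hy
      have hyz : ‖y - z‖ ≤ ‖w - z‖ := by
        obtain ⟨a, b, ha, hb, hab, rfl⟩ := hy
        have : a • z + b • w - z = b • (w - z) := by
          have ha' : a = 1 - b := by linarith
          subst ha'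
          rw [sub_smul, one_smul, smul_sub]
          abel
        rw [this, norm_smul]
        simpa [abs_of_nonneg hb] using
          mul_le_of_le_one_left (norm_nonneg _) (by simpa [abs_of_nonneg hb] using
            (by linarith : b ≤ 1))
      calc ‖fderiv ℝ L y - fderiv ℝ L z‖ ≤ M2 * ‖y - z‖ := hDLlip z hz y (hseg hy)
        _ ≤ M2 * ‖w - z‖ := by exact mul_le_mul_of_nonneg_left hyz hM2nn
    have := (convex_segment z w).norm_image_sub_le_of_norm_hasFDerivWithin_le hg hbound
      (left_mem_segment ℝ z w) (right_mem_segment ℝ z w)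
    have hgz : g z = L z := by simp [hgdef]
    have hgw : g w = L w - fderiv ℝ L z (w - z) := rfl
    rw [hgz, hgw] at this
    calc |L w - L z - fderiv ℝ L z (w - z)|
        = ‖L w - fderiv ℝ L z (w - z) - L z‖ := by rw [Real.norm_eq_abs]; ring_nf
      _ ≤ M2 * ‖w - z‖ * ‖w - z‖ := this
  -- continuity of the exact integrand
  have hcontφ : Continuous (fun t => L (q t, deriv q t)) :=
    hL.continuous.comp (hq.continuous.prodMk hq'cd.continuous)
  have hIcc1 : ∀ {ε t : ℝ}, 0 < ε → ε ≤ 1 → t ∈ Set.Icc 0 ε → t ∈ Set.Icc (0:ℝ) 1 := by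
    intro ε t hε hε1 ht; exact ⟨ht.1, ht.2.trans hε1⟩
  have hint : ∀ ε : ℝ, (∫ t in (0:ℝ)..ε, deriv q t) = q ε - q 0 := fun ε =>
    integral_deriv_eq_sub (fun x _ => hqd x) (hq'cd.continuous.intervalIntegrable _ _)
  -- bound on the velocity argument of the discrete Lagrangian
  have hm : ∀ ε : ℝ, 0 < ε → ε ≤ 1 → ∀ t ∈ Set.Icc 0 ε,
      ‖ε⁻¹ • (q ε - q 0) - deriv q t‖ ≤ K * ε := by
    intro ε hε hε1 t ht
    have h1 : ε⁻¹ • (q ε - q 0) - deriv q t = ε⁻¹ • ((q ε - q 0) - ε • deriv q t) := by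
      simp only [smul_sub, smul_smul, inv_mul_cancel₀ hε.ne', one_smul]
    have h2 : (q ε - q 0) - ε • deriv q t = ∫ s in (0:ℝ)..ε, (deriv q s - deriv q t) := by
      rw [intervalIntegral.integral_sub (hq'cd.continuous.intervalIntegrable _ _)
        intervalIntegrable_const, hint, intervalIntegral.integral_const]
      simp
    have h3 : ‖∫ s in (0:ℝ)..ε, (deriv q s - deriv q t)‖ ≤ (K * ε) * |ε - 0| := by
      apply intervalIntegral.norm_integral_le_of_norm_le_const
      intro s hs
      rw [Set.uIoc_of_le hε.le] at hs
      have hs' : s ∈ Set.Icc (0:ℝ) 1 := ⟨hs.1.le, hs.2.trans hε1⟩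
      refine (hq'lip s hs' t (hIcc1 hε hε1 ht)).trans ?_
      have hst : ‖s - t‖ ≤ ε := by
        rw [Real.norm_eq_abs, abs_sub_le_iff]
        constructor
        · linarith [hs.2, ht.1]
        · linarith [ht.2, hs.1.le]
      exact mul_le_mul_of_nonneg_left hst hKnn
    rw [h1, h2, norm_smul, Real.norm_eq_abs, abs_of_pos (inv_pos.mpr hε)]
    calc ε⁻¹ * ‖∫ s in (0:ℝ)..ε, (deriv q s - deriv q t)‖
        ≤ ε⁻¹ * ((K * ε) * |ε - 0|) := mul_le_mul_of_nonneg_left h3 (by positivity)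
      _ = K * ε := by rw [sub_zero, abs_of_pos hε]; field_simp
  -- bound on the position argument of the discrete Lagrangian
  have hP : ∀ ε : ℝ, 0 < ε → ε ≤ 1 → ∀ t ∈ Set.Icc 0 ε,
      ‖((1-β) • q 0 + β • q ε) - q t‖ ≤ Mq * ε := by
    intro ε hε hε1 t ht
    have hsplit : ((1-β) • q 0 + β • q ε) - q t = (1-β) • (q 0 - q t) + β • (q ε - q t) := by
      module
    have h0t := hqlip 0 ⟨le_rfl, zero_le_one⟩ t (hIcc1 hε hε1 ht)
    have hεt := hqlip ε ⟨hε.le, hε1⟩ t (hIcc1 hε hε1 ht)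
    have e1 : ‖(0:ℝ) - t‖ = t := by
      rw [zero_sub, norm_neg, Real.norm_eq_abs, abs_of_nonneg ht.1]
    have e2 : ‖ε - t‖ = ε - t := by
      rw [Real.norm_eq_abs, abs_of_nonneg (by linarith [ht.2])]
    rw [e1] at h0t; rw [e2] at hεt
    calc ‖((1-β) • q 0 + β • q ε) - q t‖
        ≤ ‖(1-β) • (q 0 - q t)‖ + ‖β • (q ε - q t)‖ := by
          rw [hsplit]; exact norm_add_le _ _
      _ = (1-β) * ‖q 0 - q t‖ + β * ‖q ε - q t‖ := by
          rw [norm_smul, norm_smul, Real.norm_eq_abs, Real.norm_eq_abs,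
            abs_of_nonneg (by linarith), abs_of_nonneg hβ0]
      _ ≤ Mq * ε := by
          nlinarith [norm_nonneg (q 0 - q t), norm_nonneg (q ε - q t), ht.1, ht.2,
            mul_nonneg hβ0 (sub_nonneg.mpr ht.1),
            mul_nonneg (by linarith : (0:ℝ) ≤ 1 - β) (sub_nonneg.mpr ht.1),
            mul_nonneg hMqnn hβ0, mul_nonneg hMqnn (by linarith : (0:ℝ) ≤ 1 - β),
            mul_le_mul_of_nonneg_left h0t (by linarith : (0:ℝ) ≤ 1 - β),
            mul_le_mul_of_nonneg_left hεt hβ0,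
            mul_nonneg (mul_nonneg hMqnn hβ0) (sub_nonneg.mpr ht.1),
            mul_nonneg (mul_nonneg hMqnn (by linarith : (0:ℝ) ≤ 1 - β)) (sub_nonneg.mpr ht.1)]
  -- membership of the discrete point in the ball
  have hzB : ∀ ε : ℝ, 0 < ε → ε ≤ 1 →
      (((1-β) • q 0 + β • q ε, ε⁻¹ • (q ε - q 0)) : (Fin n → ℝ) × (Fin n → ℝ)) ∈ B := by
    intro ε hε hε1
    rw [hBdef, Metric.mem_closedBall, dist_eq_norm, hz₀def, Prod.mk_sub_mk, Prod.norm_def]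
    have h1 := hP ε hε hε1 0 ⟨le_rfl, hε.le⟩
    have h2 := hm ε hε hε1 0 ⟨le_rfl, hε.le⟩
    rw [hRdef]
    have e1 : Mq * ε ≤ Mq * 1 := mul_le_mul_of_nonneg_left hε1 hMqnn
    have e2 : K * ε ≤ K * 1 := mul_le_mul_of_nonneg_left hε1 hKnn
    refine max_le ?_ ?_
    · linarith
    · linarith
  -- membership of the exact trajectory points in the ball
  have hwB : ∀ ε : ℝ, 0 < ε → ε ≤ 1 → ∀ t ∈ Set.Icc 0 ε,
      ((q t, deriv q t) : (Fin n → ℝ) × (Fin n → ℝ)) ∈ B := by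
    intro ε hε hε1 t ht
    rw [hBdef, Metric.mem_closedBall, dist_eq_norm, hz₀def, Prod.mk_sub_mk, Prod.norm_def]
    have ht1 := hIcc1 hε hε1 ht
    have h1 := hqlip t ht1 0 ⟨le_rfl, zero_le_one⟩
    have h2 := hq'lip t ht1 0 ⟨le_rfl, zero_le_one⟩
    have e1 : ‖t - (0:ℝ)‖ = t := by
      rw [sub_zero, Real.norm_eq_abs, abs_of_nonneg ht.1]
    rw [e1] at h1 h2
    rw [hRdef]
    have e2 : Mq * t ≤ Mq * 1 := mul_le_mul_of_nonneg_left ht1.2 hMqnn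
    have e3 : K * t ≤ K * 1 := mul_le_mul_of_nonneg_left ht1.2 hKnn
    refine max_le ?_ ?_
    · linarith
    · linarith
  -- the distance between discrete point and trajectory point
  have hzw : ∀ ε : ℝ, 0 < ε → ε ≤ 1 → ∀ t ∈ Set.Icc 0 ε,
      ‖(((1-β) • q 0 + β • q ε, ε⁻¹ • (q ε - q 0)) : (Fin n → ℝ) × (Fin n → ℝ)) -
        (q t, deriv q t)‖ ≤ (Mq + K) * ε := by
    intro ε hε hε1 t ht
    rw [Prod.mk_sub_mk, Prod.norm_def]
    have e1 : Mq * ε ≤ (Mq + K) * ε := by nlinarith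
    have e2 : K * ε ≤ (Mq + K) * ε := by nlinarith
    exact max_le ((hP ε hε hε1 t ht).trans e1) ((hm ε hε hε1 t ht).trans e2)
  -- the basic rewriting of the error as a single integral
  have hmain : ∀ ε : ℝ, 0 < ε →
      ε * L ((1 - β) • q 0 + β • q ε, ε⁻¹ • (q ε - q 0)) -
          (∫ t in (0:ℝ)..ε, L (q t, deriv q t)) =
        ∫ t in (0:ℝ)..ε,
          (L ((1 - β) • q 0 + β • q ε, ε⁻¹ • (q ε - q 0)) - L (q t, deriv q t)) := by
    intro ε hε
    rw [intervalIntegral.integral_sub intervalIntegrable_const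
      (hcontφ.intervalIntegrable _ _), intervalIntegral.integral_const]
    simp [smul_eq_mul]
  -- the constant
  refine ⟨Λ * (Mq + K) + (Λ * (K / 2) + M2 * (Mq + K) ^ 2) + 1, by positivity, 1, one_pos, ?_, ?_⟩
  · -- first clause
    intro ε hε hε1
    rw [hmain ε hε, ← Real.norm_eq_abs]
    have hbd : ‖∫ t in (0:ℝ)..ε,
        (L ((1 - β) • q 0 + β • q ε, ε⁻¹ • (q ε - q 0)) - L (q t, deriv q t))‖ ≤
        (Λ * ((Mq + K) * ε)) * |ε - 0| := by
      apply intervalIntegral.norm_integral_le_of_norm_le_const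
      intro t htmem
      rw [Set.uIoc_of_le hε.le] at htmem
      have ht : t ∈ Set.Icc 0 ε := ⟨htmem.1.le, htmem.2⟩
      have := hLlip _ (hwB ε hε hε1 t ht) _ (hzB ε hε hε1)
      refine this.trans ?_
      exact mul_le_mul_of_nonneg_left (hzw ε hε hε1 t ht) hΛnn
    refine hbd.trans ?_
    rw [sub_zero, abs_of_pos hε]
    have e1 : (Λ * ((Mq + K) * ε)) * ε = (Λ * (Mq + K)) * ε ^ 2 := by ring
    rw [e1]
    apply mul_le_mul_of_nonneg_right _ (sq_nonneg ε)
    have e2 : 0 ≤ Λ * (K / 2) := by positivity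
    have e3 : 0 ≤ M2 * (Mq + K) ^ 2 := by positivity
    linarith
  · -- second clause
    intro hβhalf _ _ ε hε hε1
    subst hβhalf
    rw [hmain ε hε, ← Real.norm_eq_abs]
    set z : (Fin n → ℝ) × (Fin n → ℝ) :=
      ((1 - 1 / 2 : ℝ) • q 0 + (1 / 2 : ℝ) • q ε, ε⁻¹ • (q ε - q 0)) with hzdef
    set D : ((Fin n → ℝ) × (Fin n → ℝ)) →L[ℝ] ℝ := fderiv ℝ L z with hDdef
    have hzB' : z ∈ B := hzB ε hε hε1
    have hDΛ : ‖D‖ ≤ Λ := hΛ z hzB'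
    set Dfst : (Fin n → ℝ) →L[ℝ] ℝ := D.comp (ContinuousLinearMap.inl ℝ _ _) with hDfstdef
    set Dsnd : (Fin n → ℝ) →L[ℝ] ℝ := D.comp (ContinuousLinearMap.inr ℝ _ _) with hDsnddef
    -- pointwise decomposition
    have hptD : ∀ t : ℝ, D (z - (q t, deriv q t)) =
        Dfst (z.1 - q t) + Dsnd (z.2 - deriv q t) := by
      intro t
      rw [hDfstdef, hDsnddef, ContinuousLinearMap.comp_apply, ContinuousLinearMap.comp_apply,
        ContinuousLinearMap.inl_apply, ContinuousLinearMap.inr_apply, ← map_add]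
      congr 1
      rw [Prod.mk_add_mk]
      rw [show z - (q t, deriv q t) = (z.1 - q t, z.2 - deriv q t) from rfl]
      simp
    have hdecomp : ∀ t : ℝ, L z - L (q t, deriv q t) =
        D (z - (q t, deriv q t)) +
          (L z - L (q t, deriv q t) - D (z - (q t, deriv q t))) := by
      intro t; ring
    -- continuity facts
    have hcont1 : Continuous fun t => z - (q t, deriv q t) :=
      continuous_const.sub (hq.continuous.prodMk hq'cd.continuous)
    have hcontD : Continuous fun t => D (z - (q t, deriv q t)) :=
      D.continuous.comp hcont1
    have hcontr : Continuous fun t =>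
        L z - L (q t, deriv q t) - D (z - (q t, deriv q t)) :=
      (continuous_const.sub hcontφ).sub hcontD
    have hcontf : Continuous fun t => z.1 - q t := continuous_const.sub hq.continuous
    have hconts : Continuous fun t => z.2 - deriv q t := continuous_const.sub hq'cd.continuous
    -- split the integral
    have hsplitint : (∫ t in (0:ℝ)..ε, (L z - L (q t, deriv q t))) =
        (Dfst (∫ t in (0:ℝ)..ε, (z.1 - q t)) + Dsnd (∫ t in (0:ℝ)..ε, (z.2 - deriv q t))) +
          ∫ t in (0:ℝ)..ε, (L z - L (q t, deriv q t) - D (z - (q t, deriv q t))) := by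
      have hi1 : IntervalIntegrable (fun t => Dfst (z.1 - q t)) MeasureTheory.volume 0 ε :=
        ((Dfst.continuous.comp hcontf).intervalIntegrable _ _)
      have hi2 : IntervalIntegrable (fun t => Dsnd (z.2 - deriv q t)) MeasureTheory.volume 0 ε :=
        ((Dsnd.continuous.comp hconts).intervalIntegrable _ _)
      have hi12 : IntervalIntegrable
          (fun t => Dfst (z.1 - q t) + Dsnd (z.2 - deriv q t)) MeasureTheory.volume 0 ε :=
        hi1.add hi2
      rw [← Dfst.intervalIntegral_comp_comm (hcontf.intervalIntegrable _ _),
        ← Dsnd.intervalIntegral_comp_comm (hconts.intervalIntegrable _ _),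
        ← intervalIntegral.integral_add hi1 hi2,
        ← intervalIntegral.integral_add hi12 (hcontr.intervalIntegrable _ _)]
      apply intervalIntegral.integral_congr
      intro t _
      simp only []
      rw [← hptD t]
      ring
    -- the second component integral vanishes
    have hsnd0 : (∫ t in (0:ℝ)..ε, (z.2 - deriv q t)) = 0 := by
      rw [intervalIntegral.integral_sub intervalIntegrable_const
        (hq'cd.continuous.intervalIntegrable _ _), hint, intervalIntegral.integral_const]
      rw [show z.2 = ε⁻¹ • (q ε - q 0) from rfl]
      rw [sub_zero, smul_smul, mul_inv_cancel₀ hε.ne', one_smul, sub_self]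
    -- trapezoidal rule error bound on the first component
    set U : ℝ → (Fin n → ℝ) :=
      fun u => (u / 2) • (q 0 + q u) - ∫ t in (0:ℝ)..u, q t with hUdef
    set U₁ : ℝ → (Fin n → ℝ) :=
      fun u => (1 / 2 : ℝ) • (q 0 - q u) + (u / 2) • deriv q u with hU₁def
    set U₂ : ℝ → (Fin n → ℝ) := fun u => (u / 2) • deriv (deriv q) u with hU₂def
    have hU' : ∀ u : ℝ, HasDerivAt U (U₁ u) u := by
      intro u
      have h1 : HasDerivAt (fun u : ℝ => u / 2) (1 / 2) u := (hasDerivAt_id u).div_const 2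
      have h2 : HasDerivAt (fun u => q 0 + q u) (deriv q u) u := (hqd u).hasDerivAt.const_add (q 0)
      have h4 : HasDerivAt (fun u => ∫ t in (0:ℝ)..u, q t) (q u) u :=
        intervalIntegral.integral_hasDerivAt_right (hq.continuous.intervalIntegrable _ _)
          (hq.continuous.stronglyMeasurableAtFilter _ _) hq.continuous.continuousAt
      have h5 := (h1.smul h2).sub h4
      refine h5.congr_deriv ?_
      rw [hU₁def]
      module
    have hU₁' : ∀ u : ℝ, HasDerivAt U₁ (U₂ u) u := by
      intro u
      have h1 : HasDerivAt (fun u => (1 / 2 : ℝ) • (q 0 - q u)) ((1 / 2 : ℝ) • -deriv q u) u :=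
        ((hqd u).hasDerivAt.const_sub (q 0)).const_smul (1 / 2 : ℝ)
      have h2 : HasDerivAt (fun u => (u / 2) • deriv q u)
          ((u / 2) • deriv (deriv q) u + (1 / 2 : ℝ) • deriv q u) u :=
        ((hasDerivAt_id u).div_const 2).smul (hq'd u).hasDerivAt
      have h3 := h1.add h2
      refine h3.congr_deriv ?_
      rw [hU₂def]
      module
    have hcontU₁ : Continuous U₁ := by
      rw [hU₁def]
      exact ((continuous_const (y := (1/2:ℝ))).smul ((continuous_const (y := q 0)).sub hq.continuous)).add
        ((continuous_id.div_const 2).smul hq'cd.continuous)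
    have hcontU₂ : Continuous U₂ := by
      rw [hU₂def]
      exact (continuous_id.div_const 2).smul hq''cont
    have hU0 : U 0 = 0 := by simp [hUdef]
    have hU₁0 : U₁ 0 = 0 := by simp [hU₁def]
    have hU₁bound : ∀ t ∈ Set.uIoc (0:ℝ) ε, ‖U₁ t‖ ≤ (ε / 2 * K) * ε := by
      intro t ht
      rw [Set.uIoc_of_le hε.le] at ht
      have hUeq1 : U₁ t = ∫ s in (0:ℝ)..t, U₂ s := by
        have := intervalIntegral.integral_eq_sub_of_hasDerivAt
          (f := U₁) (f' := U₂) (a := (0:ℝ)) (b := t)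
          (fun s _ => hU₁' s) (hcontU₂.intervalIntegrable _ _)
        rw [hU₁0, sub_zero] at this
        exact this.symm
      rw [hUeq1]
      have h1 : ‖∫ s in (0:ℝ)..t, U₂ s‖ ≤ (ε / 2 * K) * |t - 0| := by
        apply intervalIntegral.norm_integral_le_of_norm_le_const
        intro s hs
        rw [Set.uIoc_of_le ht.1.le] at hs
        have hs1 : s ∈ Set.Icc (0:ℝ) 1 := ⟨hs.1.le, hs.2.trans (ht.2.trans hε1)⟩
        rw [hU₂def]
        rw [norm_smul, Real.norm_eq_abs, abs_of_nonneg (by linarith [hs.1.le] : (0:ℝ) ≤ s / 2)]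
        have hb : ‖deriv (deriv q) s‖ ≤ K := (hK0 s hs1).trans (le_max_left K0 0)
        have hs2 : s / 2 ≤ ε / 2 := by linarith [hs.2, ht.2]
        have := mul_le_mul hs2 hb (norm_nonneg _) (by linarith : (0:ℝ) ≤ ε / 2)
        exact this
      refine h1.trans ?_
      rw [sub_zero, abs_of_pos ht.1]
      have : (0:ℝ) ≤ ε / 2 * K := by positivity
      nlinarith [ht.2]
    have hUbound : ‖U ε‖ ≤ (ε / 2 * K) * ε * ε := by
      have hUeq : U ε = ∫ t in (0:ℝ)..ε, U₁ t := by
        have := intervalIntegral.integral_eq_sub_of_hasDerivAt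
          (f := U) (f' := U₁) (a := (0:ℝ)) (b := ε)
          (fun t _ => hU' t) (hcontU₁.intervalIntegrable _ _)
        rw [hU0, sub_zero] at this
        exact this.symm
      rw [hUeq]
      have := intervalIntegral.norm_integral_le_of_norm_le_const hU₁bound
      rw [sub_zero, abs_of_pos hε] at this
      exact this
    -- the first component integral is the trapezoid error
    have hfst : (∫ t in (0:ℝ)..ε, (z.1 - q t)) = U ε := by
      rw [intervalIntegral.integral_sub intervalIntegrable_const
        (hq.continuous.intervalIntegrable _ _), intervalIntegral.integral_const, hUdef]
      rw [show z.1 = (1 - 1 / 2 : ℝ) • q 0 + (1 / 2 : ℝ) • q ε from rfl]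
      rw [sub_zero]
      congr 1
      module
    -- bound on the Taylor remainder
    have hrbound : ∀ t ∈ Set.uIoc (0:ℝ) ε,
        ‖L z - L (q t, deriv q t) - D (z - (q t, deriv q t))‖ ≤
          M2 * ((Mq + K) * ε) * ((Mq + K) * ε) := by
      intro t ht
      rw [Set.uIoc_of_le hε.le] at ht
      have htI : t ∈ Set.Icc 0 ε := ⟨ht.1.le, ht.2⟩
      have hwB' := hwB ε hε hε1 t htI
      have h1 := htaylor z hzB' _ hwB'
      have h2 : L z - L (q t, deriv q t) - D (z - (q t, deriv q t)) =
          -(L (q t, deriv q t) - L z - D ((q t, deriv q t) - z)) := by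
        rw [map_sub, map_sub]; ring
      rw [h2, norm_neg, Real.norm_eq_abs]
      refine h1.trans ?_
      have h3 : ‖(q t, deriv q t) - z‖ ≤ (Mq + K) * ε := by
        rw [norm_sub_rev]
        exact hzw ε hε hε1 t htI
      have hn : (0:ℝ) ≤ ‖(q t, deriv q t) - z‖ := norm_nonneg _
      have h4 : ‖(q t, deriv q t) - z‖ * ‖(q t, deriv q t) - z‖ ≤
          ((Mq + K) * ε) * ((Mq + K) * ε) := mul_le_mul h3 h3 hn (hn.trans h3)
      rw [mul_assoc, mul_assoc]
      exact mul_le_mul_of_nonneg_left h4 hM2nn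
    -- put everything together
    rw [hsplitint, hsnd0, map_zero, add_zero, hfst]
    have hA : ‖Dfst (U ε)‖ ≤ Λ * ((ε / 2 * K) * ε * ε) := by
      have h1 : Dfst (U ε) = D (U ε, 0) := rfl
      rw [h1]
      have h2 := D.le_opNorm (U ε, 0)
      have h3 : ‖((U ε, 0) : (Fin n → ℝ) × (Fin n → ℝ))‖ = ‖U ε‖ := by
        rw [Prod.norm_def]
        simp
      rw [h3] at h2
      refine h2.trans ?_
      exact mul_le_mul hDΛ hUbound (norm_nonneg _) hΛnn
    have hB : ‖∫ t in (0:ℝ)..ε,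
        (L z - L (q t, deriv q t) - D (z - (q t, deriv q t)))‖ ≤
        (M2 * ((Mq + K) * ε) * ((Mq + K) * ε)) * ε := by
      have := intervalIntegral.norm_integral_le_of_norm_le_const hrbound
      rw [sub_zero, abs_of_pos hε] at this
      exact this
    refine (norm_add_le _ _).trans ?_
    refine (add_le_add hA hB).trans ?_
    have e1 : Λ * ((ε / 2 * K) * ε * ε) + (M2 * ((Mq + K) * ε) * ((Mq + K) * ε)) * ε =
        (Λ * (K / 2) + M2 * (Mq + K) ^ 2) * ε ^ 3 := by ring
    rw [e1]
    apply mul_le_mul_of_nonneg_right _ (by positivity : (0:ℝ) ≤ ε ^ 3)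
    have e2 : 0 ≤ Λ * (Mq + K) := by positivity
    linarith
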